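/- arXiv:2405.00262 — 3 statements merged into one kernel-verified Lean document; each statement's English description precedes it below -/
import Mathlib

section
/- Given a simple undirected graph G with m edges whose edge set can be decomposed into at most α forests, the sum over all edges {u,v} of min(deg(u), deg(v)) is at most 2·m·α. -/
open Finset SimpleGraph

/-- The minimum of the degrees of the two endpoints of an edge. -/
def minDeg {V : Type*} [Fintype V] (G : SimpleGraph V) [DecidableRel G.Adj]
    (e : Sym2 V) : ℕ :=
  Sym2.lift ⟨fun u v => min (G.degree u) (G.degree v), fun _ _ => min_comm _ _⟩ e

/-- A finite acyclic graph with an edge has a leaf. -/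
lemma exists_leaf {V : Type*} [Fintype V] [DecidableEq V] (H : SimpleGraph V)
    [DecidableRel H.Adj] (hac : H.IsAcyclic) {u₀ v₀ : V} (h₀ : H.Adj u₀ v₀) :
    ∃ v w, H.Adj v w ∧ H.neighborFinset v = {w} := by
  classical
  set P : ℕ → Prop := fun n => ∃ (u v : V) (p : H.Walk u v), p.IsPath ∧ p.length = n with hP
  have h1 : P 1 := ⟨u₀, v₀, .cons h₀ .nil, by simp [SimpleGraph.Walk.isPath_def, h₀.ne], rfl⟩
  have hbd : ∀ n, P n → n < Fintype.card V := by
    rintro n ⟨u, v, p, hp, rfl⟩; exact hp.length_lt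
  have h1b : 1 ≤ Fintype.card V := le_of_lt (hbd 1 h1)
  set n := Nat.findGreatest P (Fintype.card V) with hn
  have hPn : P n := Nat.findGreatest_spec h1b h1
  have hn1 : 1 ≤ n := Nat.le_findGreatest h1b h1
  obtain ⟨u, v, p, hp, hlen⟩ := hPn
  have hvu : v ≠ u := by
    rintro rfl
    rw [SimpleGraph.Walk.isPath_iff_eq_nil] at hp
    subst hp
    simp at hlen; omega
  obtain ⟨w, hvw, q, hq⟩ := SimpleGraph.Walk.exists_eq_cons_of_ne hvu p.reverse
  have hrp : p.reverse.IsPath := hp.reverse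
  refine ⟨v, w, hvw, ?_⟩
  ext x
  simp only [mem_neighborFinset, Finset.mem_singleton]
  constructor
  · intro hvx
    by_contra hxw
    by_cases hxs : x ∈ p.reverse.support
    · -- cycle
      have hxv : x ≠ v := fun h => H.irrefl (h ▸ hvx)
      have ht : (p.reverse.takeUntil x hxs).IsPath := hrp.takeUntil hxs
      refine hac (Walk.cons hvx.symm (p.reverse.takeUntil x hxs)) ?_
      rw [SimpleGraph.Walk.cons_isCycle_iff]
      refine ⟨ht, fun hmem => ?_⟩
      have hsub := p.reverse.edges_takeUntil_subset hxs
      have hmem' := hsub hmem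
      rw [hq, SimpleGraph.Walk.edges_cons, List.mem_cons] at hmem'
      rcases hmem' with h | h
      · rw [Sym2.eq_iff] at h
        rcases h with ⟨h1, h2⟩ | ⟨h1, h2⟩
        · exact hxv h1
        · exact hxw h1
      · have : v ∈ q.support := q.snd_mem_support_of_mem_edges h
        rw [hq, SimpleGraph.Walk.cons_isPath_iff] at hrp
        exact hrp.2 this
    · -- extend: contradiction with maximality
      have hc : (Walk.cons hvx.symm p.reverse).IsPath :=
        SimpleGraph.Walk.IsPath.cons hrp hxs
      have hPn1 : P (n + 1) := ⟨x, u, _, hc, by simp [hlen]⟩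
      exact Nat.findGreatest_is_greatest (by rw [← hn]; omega) (le_of_lt (hbd _ hPn1)) hPn1
  · rintro rfl; exact hvw

lemma sum_minDeg_forest {V : Type*} [Fintype V] [DecidableEq V] (G : SimpleGraph V)
    [DecidableRel G.Adj] :
    ∀ (n : ℕ) (H : SimpleGraph V) (_ : DecidableRel H.Adj), H ≤ G → H.IsAcyclic →
      H.edgeFinset.card = n →
      ∑ e ∈ H.edgeFinset, minDeg G e ≤
        ∑ v ∈ Finset.univ.filter (fun v => 0 < H.degree v), G.degree v := by
  intro n
  induction n using Nat.strong_induction_on with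
  | _ n IH =>
    intro H hdec hle hac hcard
    classical
    rcases Finset.eq_empty_or_nonempty H.edgeFinset with hemp | hne
    · simp [hemp]
    · obtain ⟨e₀, he₀⟩ := hne
      have he₀' : e₀ ∈ H.edgeSet := mem_edgeFinset.mp he₀
      obtain ⟨a, b, rfl⟩ : ∃ a b, e₀ = s(a, b) := ⟨(Quot.out e₀).1, (Quot.out e₀).2, (Quot.out_eq e₀).symm⟩
      rw [mem_edgeSet] at he₀'
      obtain ⟨v, w, hvw, hnbr⟩ := exists_leaf H hac he₀'
      set H' := H.deleteEdges {s(v, w)} with hH'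
      letI : DecidableRel H'.Adj := Classical.decRel _
      have hH'le : H' ≤ H := SimpleGraph.deleteEdges_le _
      have hH'ac : H'.IsAcyclic := fun x c hc =>
        hac (c.mapLe hH'le) (hc.mapLe hH'le)
      have hedges : H'.edgeFinset = H.edgeFinset.erase s(v, w) := by
        ext e
        simp only [mem_edgeFinset, Finset.mem_erase, hH', SimpleGraph.edgeSet_deleteEdges,
          Set.mem_diff, Set.mem_singleton_iff]
        tauto
      have hvwmem : s(v, w) ∈ H.edgeFinset := by
        rw [mem_edgeFinset, mem_edgeSet]; exact hvw
      have hcard' : H'.edgeFinset.card = n - 1 := by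
        rw [hedges, Finset.card_erase_of_mem hvwmem, hcard]
      have hn1 : 1 ≤ n := by
        rw [← hcard]; exact Finset.card_pos.mpr ⟨_, hvwmem⟩
      -- no H'-neighbors of v
      have hvdeg : ∀ x, ¬ H'.Adj v x := by
        intro x hx
        rw [hH', SimpleGraph.deleteEdges_adj] at hx
        have : x ∈ H.neighborFinset v := by rw [mem_neighborFinset]; exact hx.1
        rw [hnbr, Finset.mem_singleton] at this
        exact hx.2 (by rw [this]; rfl)
      -- support subset
      have hsub : Finset.univ.filter (fun u => 0 < H'.degree u) ⊆
          (Finset.univ.filter (fun u => 0 < H.degree u)).erase v := by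
        intro u hu
        rw [Finset.mem_filter] at hu
        obtain ⟨x, hux⟩ := (SimpleGraph.degree_pos_iff_exists_adj _ _).mp hu.2
        rw [Finset.mem_erase, Finset.mem_filter]
        refine ⟨?_, Finset.mem_univ _, ?_⟩
        · rintro rfl; exact hvdeg x hux
        · exact (SimpleGraph.degree_pos_iff_exists_adj _ _).mpr ⟨x, hH'le hux⟩
      have hvS : v ∈ Finset.univ.filter (fun u => 0 < H.degree u) := by
        rw [Finset.mem_filter]
        exact ⟨Finset.mem_univ _, (SimpleGraph.degree_pos_iff_exists_adj _ _).mpr ⟨w, hvw⟩⟩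
      have hIH := IH (n - 1) (by omega) H' _ (le_trans hH'le hle) hH'ac hcard'
      have hsplit : ∑ e ∈ H.edgeFinset, minDeg G e
          = minDeg G s(v, w) + ∑ e ∈ H.edgeFinset.erase s(v, w), minDeg G e :=
        (Finset.add_sum_erase _ _ hvwmem).symm
      have hmin : minDeg G s(v, w) ≤ G.degree v := by
        simp only [minDeg, Sym2.lift_mk]
        exact min_le_left _ _
      calc ∑ e ∈ H.edgeFinset, minDeg G e
          = minDeg G s(v, w) + ∑ e ∈ H'.edgeFinset, minDeg G e := by rw [hsplit, hedges]
        _ ≤ G.degree v + ∑ u ∈ Finset.univ.filter (fun u => 0 < H'.degree u), G.degree u :=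
            Nat.add_le_add hmin hIH
        _ ≤ G.degree v + ∑ u ∈ (Finset.univ.filter (fun u => 0 < H.degree u)).erase v,
              G.degree u := Nat.add_le_add_left (Finset.sum_le_sum_of_subset hsub) _
        _ = ∑ u ∈ Finset.univ.filter (fun u => 0 < H.degree u), G.degree u :=
            Finset.add_sum_erase _ (fun u => G.degree u) hvS

/-- Chiba–Nishizeki: if the edges of `G` decompose into `α` forests, then the sum over
all edges of the minimum endpoint degree is at most `2 * m * α`. -/
theorem sum_min_degree_le_of_forest_decomposition
    {V : Type*} [Fintype V] [DecidableEq V] (G : SimpleGraph V) [DecidableRel G.Adj]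
    (α : ℕ) (F : Fin α → SimpleGraph V)
    (hle : ∀ i, F i ≤ G)
    (hforest : ∀ i, (F i).IsAcyclic)
    (hpart : ∀ e ∈ G.edgeSet, ∃! i, e ∈ (F i).edgeSet) :
    ∑ e ∈ G.edgeFinset, minDeg G e ≤ 2 * G.edgeFinset.card * α := by
  classical
  letI : ∀ i, DecidableRel (F i).Adj := fun i => Classical.decRel _
  have key : ∑ e ∈ G.edgeFinset, minDeg G e
      = ∑ i : Fin α, ∑ e ∈ (F i).edgeFinset, minDeg G e := by
    have step1 : ∀ e ∈ G.edgeFinset,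
        minDeg G e = ∑ i : Fin α, if e ∈ (F i).edgeSet then minDeg G e else 0 := by
      intro e he
      obtain ⟨i₀, hi₀, huniq⟩ := hpart e (mem_edgeFinset.mp he)
      rw [Finset.sum_eq_single_of_mem i₀ (Finset.mem_univ _)]
      · rw [if_pos hi₀]
      · intro j _ hj
        rw [if_neg (fun hmem => hj (huniq j hmem))]
    rw [Finset.sum_congr rfl step1, Finset.sum_comm]
    refine Finset.sum_congr rfl fun i _ => ?_
    rw [← Finset.sum_filter]
    congr 1
    ext e
    simp only [Finset.mem_filter, mem_edgeFinset]
    constructor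
    · rintro ⟨_, h⟩; exact h
    · intro h; exact ⟨SimpleGraph.edgeSet_mono (hle i) h, h⟩
  rw [key]
  have hbound : ∀ i : Fin α, ∑ e ∈ (F i).edgeFinset, minDeg G e ≤ 2 * G.edgeFinset.card := by
    intro i
    calc ∑ e ∈ (F i).edgeFinset, minDeg G e
        ≤ ∑ v ∈ Finset.univ.filter (fun v => 0 < (F i).degree v), G.degree v :=
          sum_minDeg_forest G _ (F i) _ (hle i) (hforest i) rfl
      _ ≤ ∑ v, G.degree v := Finset.sum_le_sum_of_subset (Finset.filter_subset _ _)
      _ = 2 * G.edgeFinset.card := G.sum_degrees_eq_twice_card_edges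
  calc ∑ i : Fin α, ∑ e ∈ (F i).edgeFinset, minDeg G e
      ≤ ∑ _i : Fin α, 2 * G.edgeFinset.card := Finset.sum_le_sum fun i _ => hbound i
    _ = 2 * G.edgeFinset.card * α := by
        rw [Finset.sum_const, Finset.card_univ, Fintype.card_fin, smul_eq_mul, mul_comm]
end

section
/- In a finite simple undirected graph of arboricity α, the number of triangles is at most (2/3)·m·α, i.e., 3·(number of triangles) ≤ 2·m·α. -/
open SimpleGraph Finset

section Aux

variable {V : Type*} [Fintype V] [DecidableEq V]

private lemma sym2_out_eq (e : Sym2 V) : s(e.out.1, e.out.2) = e := by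
  show Quot.mk _ (e.out.1, e.out.2) = e
  rw [Prod.mk.eta, e.out_eq]

/-- In any graph, a shortest path from `y` to `r` avoids any neighbor `x` of `y`
whose distance to `r` is at least that of `y`. -/
private lemma avoid_aux {F : SimpleGraph V} {x y r : V} (hxy : F.Adj x y)
    (hyr : F.Reachable y r) (hd : F.dist y r ≤ F.dist x r) :
    ∃ q : F.Walk y r, q.IsPath ∧ q.length = F.dist y r ∧ x ∉ q.support := by
  obtain ⟨q, hq, hlen⟩ := hyr.exists_path_of_dist
  refine ⟨q, hq, hlen, fun hx => ?_⟩
  have hxy' : y ≠ x := hxy.ne'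
  have hlen2 : (q.takeUntil x hx).length + (q.dropUntil x hx).length = q.length := by
    rw [← Walk.length_append, q.take_spec hx]
  have h1 : 1 ≤ (q.takeUntil x hx).length := by
    by_contra h
    push_neg at h
    exact hxy' (Walk.eq_of_length_eq_zero (Nat.lt_one_iff.mp h))
  have hdist : F.dist x r ≤ (q.dropUntil x hx).length := F.dist_le _
  omega

/-- In an acyclic graph, adjacent vertices have different distances to a common
reachable vertex. -/
private lemma dist_ne_of_adj {F : SimpleGraph V} (hF : F.IsAcyclic) {x y r : V}
    (hxy : F.Adj x y) (hxr : F.Reachable x r) (hyr : F.Reachable y r) :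
    F.dist x r ≠ F.dist y r := by
  intro heq
  obtain ⟨p, hp, hplen⟩ := hxr.exists_path_of_dist
  obtain ⟨q, hq, hqlen, hxq⟩ := avoid_aux hxy hyr heq.ge
  have h2 : (Walk.cons hxy q).IsPath := hq.cons hxq
  have h3 : (⟨p, hp⟩ : F.Path x r) = ⟨Walk.cons hxy q, h2⟩ := hF.path_unique _ _
  have h5 : p = Walk.cons hxy q := congrArg Subtype.val h3
  have h4 : p.length = q.length + 1 := by rw [h5, Walk.length_cons]
  omega

/-- In an acyclic graph, a vertex has at most one neighbor strictly closer to a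
given reachable vertex. -/
private lemma parent_unique {F : SimpleGraph V} (hF : F.IsAcyclic) {x y₁ y₂ r : V}
    (hxy1 : F.Adj x y₁) (hxy2 : F.Adj x y₂)
    (hy1 : F.Reachable y₁ r) (hy2 : F.Reachable y₂ r)
    (h1 : F.dist y₁ r < F.dist x r) (h2 : F.dist y₂ r < F.dist x r) : y₁ = y₂ := by
  obtain ⟨q1, hq1, _, hx1⟩ := avoid_aux hxy1 hy1 h1.le
  obtain ⟨q2, hq2, _, hx2⟩ := avoid_aux hxy2 hy2 h2.le
  have h3 : (⟨Walk.cons hxy1 q1, hq1.cons hx1⟩ : F.Path x r)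
      = ⟨Walk.cons hxy2 q2, hq2.cons hx2⟩ := hF.path_unique _ _
  have h5 : Walk.cons hxy1 q1 = Walk.cons hxy2 q2 := congrArg Subtype.val h3
  have h4 := congrArg Walk.support h5
  rw [Walk.support_cons, Walk.support_cons, q1.support_eq_cons, q2.support_eq_cons] at h4
  have h6 : y₁ = y₂ ∧ q1.support.tail = q2.support.tail :=
    ⟨(List.cons.inj (List.cons.inj h4).2).1, (List.cons.inj (List.cons.inj h4).2).2⟩
  exact h6.1

/-- Every forest admits an injective choice of an endpoint for each edge. -/
private lemma forest_inj {F : SimpleGraph V} (hF : F.IsAcyclic) :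
    ∃ c : Sym2 V → V, (∀ e ∈ F.edgeSet, c e ∈ e) ∧ Set.InjOn c F.edgeSet := by
  classical
  set root : V → V := fun v => (F.connectedComponentMk v).out with hroot
  have hreach : ∀ v, F.Reachable v (root v) := fun v =>
    (ConnectedComponent.exact ((F.connectedComponentMk v).out_eq)).symm
  have hroot_eq : ∀ {u v : V}, F.Adj u v → root u = root v := by
    intro u v h
    simp only [hroot]
    rw [ConnectedComponent.sound h.reachable]
  set d : V → ℕ := fun v => F.dist v (root v) with hd
  refine ⟨fun e => if d e.out.1 < d e.out.2 then e.out.2 else e.out.1, ?_, ?_⟩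
  · intro e _
    dsimp only
    split
    · exact e.out_snd_mem
    · exact e.out_fst_mem
  · -- key: on edges, c picks the endpoint with strictly larger `d`
    have hmax : ∀ e ∈ F.edgeSet, ∀ w ∈ e,
        w ≠ (if d e.out.1 < d e.out.2 then e.out.2 else e.out.1) →
        F.Adj w (if d e.out.1 < d e.out.2 then e.out.2 else e.out.1) ∧
        d w < d (if d e.out.1 < d e.out.2 then e.out.2 else e.out.1) := by
      intro e he w hw hwne
      have hadj : F.Adj e.out.1 e.out.2 := by
        rw [← F.mem_edgeSet, sym2_out_eq e]; exact he
      have hne : d e.out.1 ≠ d e.out.2 := by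
        simp only [hd]
        rw [hroot_eq hadj]
        exact dist_ne_of_adj hF hadj
          (hroot_eq hadj ▸ hreach e.out.1) (hreach e.out.2)
      rw [← sym2_out_eq e, Sym2.mem_iff] at hw
      rcases lt_or_ge (d e.out.1) (d e.out.2) with hlt | hge
      · rw [if_pos hlt] at hwne ⊢
        rcases hw with rfl | rfl
        · exact ⟨hadj, hlt⟩
        · exact absurd rfl hwne
      · rw [if_neg (not_lt.mpr hge)] at hwne ⊢
        rcases hw with rfl | rfl
        · exact absurd rfl hwne
        · exact ⟨hadj.symm, lt_of_le_of_ne hge hne.symm⟩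
    intro e1 he1 e2 he2 hc
    dsimp only at hc
    set x := if d e1.out.1 < d e1.out.2 then e1.out.2 else e1.out.1 with hx
    have hx1 : x ∈ e1 := by
      rw [hx]; split
      · exact e1.out_snd_mem
      · exact e1.out_fst_mem
    have hx2 : x ∈ e2 := by
      rw [hc]; split
      · exact e2.out_snd_mem
      · exact e2.out_fst_mem
    obtain ⟨y1, hy1⟩ := Sym2.mem_iff_exists.mp hx1
    obtain ⟨y2, hy2⟩ := Sym2.mem_iff_exists.mp hx2
    have hy1m : y1 ∈ e1 := by rw [hy1]; exact Sym2.mem_mk_right x y1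
    have hy2m : y2 ∈ e2 := by rw [hy2]; exact Sym2.mem_mk_right x y2
    have hy1ne : y1 ≠ x := by
      rintro rfl
      exact F.not_isDiag_of_mem_edgeSet he1 (hy1 ▸ Sym2.mk_isDiag_iff.mpr rfl)
    have hy2ne : y2 ≠ x := by
      rintro rfl
      exact F.not_isDiag_of_mem_edgeSet he2 (hy2 ▸ Sym2.mk_isDiag_iff.mpr rfl)
    have ha1' := hmax e1 he1 y1 hy1m (by rw [← hx]; exact hy1ne)
    rw [← hx] at ha1'
    obtain ⟨ha1, hd1⟩ := ha1'
    have ha2' := hmax e2 he2 y2 hy2m (by rw [← hc]; exact hy2ne)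
    rw [← hc] at ha2'
    obtain ⟨ha2, hd2⟩ := ha2'
    -- rewrite everything with r := root x
    have hr1 : root y1 = root x := hroot_eq ha1
    have hr2 : root y2 = root x := hroot_eq ha2
    have : y1 = y2 := by
      refine parent_unique hF ha1.symm ha2.symm
        (hr1 ▸ hreach y1) (hr2 ▸ hreach y2) ?_ ?_
      · simpa only [hd, hr1] using hd1
      · simpa only [hd, hr2] using hd2
    rw [hy1, hy2, this]

/-- The structure of a 3-clique containing two given distinct vertices. -/
private lemma clique3_structure {G : SimpleGraph V} {t : Finset V} {u v : V}
    (h : G.IsNClique 3 t) (hu : u ∈ t) (hv : v ∈ t) (huv : u ≠ v) :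
    ∃ w, G.Adj u w ∧ G.Adj v w ∧ t = {u, v, w} := by
  have h3 : t.card = 3 := h.card_eq
  have hv' : v ∈ t.erase u := Finset.mem_erase.mpr ⟨huv.symm, hv⟩
  have hcard1 : ((t.erase u).erase v).card = 1 := by
    rw [Finset.card_erase_of_mem hv', Finset.card_erase_of_mem hu, h3]
  obtain ⟨w, hw⟩ := Finset.card_eq_one.mp hcard1
  have hwmem : w ∈ (t.erase u).erase v := hw ▸ Finset.mem_singleton_self w
  have hwv : w ≠ v := (Finset.mem_erase.mp hwmem).1
  have hwu : w ≠ u := (Finset.mem_erase.mp (Finset.mem_erase.mp hwmem).2).1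
  have hwt : w ∈ t := (Finset.mem_erase.mp (Finset.mem_erase.mp hwmem).2).2
  refine ⟨w, h.isClique hu hwt hwu.symm, h.isClique hv hwt hwv.symm, ?_⟩
  refine (Finset.eq_of_subset_of_card_le ?_ ?_).symm
  · intro z hz
    simp only [Finset.mem_insert, Finset.mem_singleton] at hz
    rcases hz with rfl | rfl | rfl <;> assumption
  · have : ({u, v, w} : Finset V).card = 3 := by
      rw [Finset.card_insert_of_notMem (by simp [huv, hwu.symm]),
        Finset.card_insert_of_notMem (by simp [hwv.symm]), Finset.card_singleton]
    omega

end Aux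

set_option maxHeartbeats 1600000 in
/-- In a finite simple graph whose edges decompose into `α` forests (arboricity `α`),
three times the number of triangles is at most `2 * m * α`. -/
theorem three_mul_triangle_count_le
    {V : Type*} [Fintype V] [DecidableEq V] (G : SimpleGraph V) [DecidableRel G.Adj]
    (α : ℕ) (F : Fin α → SimpleGraph V)
    (hle : ∀ i, F i ≤ G)
    (hforest : ∀ i, (F i).IsAcyclic)
    (hpart : ∀ e ∈ G.edgeSet, ∃! i, e ∈ (F i).edgeSet) :
    3 * (G.cliqueFinset 3).card ≤ 2 * G.edgeFinset.card * α := by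
  classical
  set T := G.cliqueFinset 3 with hT
  set E := G.edgeFinset with hE
  set md : Sym2 V → ℕ := fun e => min (G.degree e.out.1) (G.degree e.out.2) with hmd
  -- Step 1: each triangle contains exactly 3 edges
  have key1 : ∀ t ∈ T, (E.filter (fun e => ∀ a ∈ e, a ∈ t)).card = 3 := by
    intro t ht
    rw [hT, mem_cliqueFinset_iff, is3Clique_iff] at ht
    obtain ⟨a, b, c, hab, hac, hbc, rfl⟩ := ht
    have heq : E.filter (fun e => ∀ x ∈ e, x ∈ ({a, b, c} : Finset V))
        = {s(a, b), s(a, c), s(b, c)} := by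
      ext e
      induction e using Sym2.ind with
      | _ x y =>
        simp only [Finset.mem_filter, hE, mem_edgeFinset, mem_edgeSet, Sym2.mem_iff,
          Finset.mem_insert, Finset.mem_singleton, Sym2.eq_iff]
        constructor
        · rintro ⟨hxy, hmem⟩
          have hx := hmem x (Or.inl rfl)
          have hy := hmem y (Or.inr rfl)
          rcases hx with rfl | rfl | rfl <;> rcases hy with rfl | rfl | rfl <;>
            first
              | exact absurd rfl hxy.ne
              | tauto
        · intro h
          rcases h with (⟨rfl, rfl⟩ | ⟨rfl, rfl⟩) | (⟨rfl, rfl⟩ | ⟨rfl, rfl⟩) | (⟨rfl, rfl⟩ | ⟨rfl, rfl⟩) <;>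
            refine ⟨?_, by tauto⟩ <;>
            first
              | exact hab | exact hab.symm | exact hac | exact hac.symm
              | exact hbc | exact hbc.symm
    rw [heq]
    rw [Finset.card_insert_of_notMem
        (by simp [Sym2.eq_iff, hab.ne, hab.ne', hac.ne, hac.ne', hbc.ne, hbc.ne']),
      Finset.card_insert_of_notMem
        (by simp [Sym2.eq_iff, hab.ne, hab.ne', hac.ne, hac.ne', hbc.ne, hbc.ne']),
      Finset.card_singleton]
  -- Step 2: double counting
  have step1 : 3 * T.card = ∑ e ∈ E, (T.filter (fun t => ∀ a ∈ e, a ∈ t)).card := by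
    calc 3 * T.card = ∑ _t ∈ T, 3 := by rw [Finset.sum_const, smul_eq_mul, mul_comm]
      _ = ∑ t ∈ T, (E.filter (fun e => ∀ a ∈ e, a ∈ t)).card :=
          (Finset.sum_congr rfl key1).symm
      _ = ∑ t ∈ T, ∑ e ∈ E, if (∀ a ∈ e, a ∈ t) then 1 else 0 := by
          refine Finset.sum_congr rfl fun t _ => ?_
          rw [Finset.card_filter]
      _ = ∑ e ∈ E, ∑ t ∈ T, if (∀ a ∈ e, a ∈ t) then 1 else 0 := Finset.sum_comm
      _ = ∑ e ∈ E, (T.filter (fun t => ∀ a ∈ e, a ∈ t)).card := by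
          refine Finset.sum_congr rfl fun e _ => ?_
          rw [Finset.card_filter]
  -- Step 3: each edge is in at most `md e` triangles
  have step2 : ∀ e ∈ E, (T.filter (fun t => ∀ a ∈ e, a ∈ t)).card ≤ md e := by
    intro e he
    have hadj : G.Adj e.out.1 e.out.2 := by
      rw [← G.mem_edgeSet, sym2_out_eq e]
      rwa [hE, mem_edgeFinset] at he
    set u := e.out.1
    set v := e.out.2
    have hsub : T.filter (fun t => ∀ a ∈ e, a ∈ t) ⊆
        (G.neighborFinset u ∩ G.neighborFinset v).image (fun w => {u, v, w}) := by
      intro t ht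
      rw [Finset.mem_filter] at ht
      obtain ⟨htT, hmem⟩ := ht
      have hu : u ∈ t := hmem u (by rw [← sym2_out_eq e]; exact Sym2.mem_mk_left u v)
      have hv : v ∈ t := hmem v (by rw [← sym2_out_eq e]; exact Sym2.mem_mk_right u v)
      have hclique : G.IsNClique 3 t := by rwa [hT, mem_cliqueFinset_iff] at htT
      obtain ⟨w, huw, hvw, rfl⟩ := clique3_structure hclique hu hv hadj.ne
      exact Finset.mem_image.mpr ⟨w, Finset.mem_inter.mpr
        ⟨(G.mem_neighborFinset u w).mpr huw, (G.mem_neighborFinset v w).mpr hvw⟩, rfl⟩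
    calc (T.filter (fun t => ∀ a ∈ e, a ∈ t)).card
        ≤ ((G.neighborFinset u ∩ G.neighborFinset v).image (fun w => {u, v, w})).card :=
          Finset.card_le_card hsub
      _ ≤ (G.neighborFinset u ∩ G.neighborFinset v).card := Finset.card_image_le
      _ ≤ md e := by
          refine le_min ?_ ?_
          · exact le_trans (Finset.card_le_card Finset.inter_subset_left)
              (le_of_eq (G.card_neighborFinset_eq_degree u))
          · exact le_trans (Finset.card_le_card Finset.inter_subset_right)
              (le_of_eq (G.card_neighborFinset_eq_degree v))
  -- Step 4: sum of `md` over each forest is at most `2 * m`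
  have step3 : ∀ i : Fin α, ∑ e ∈ E.filter (fun e => e ∈ (F i).edgeSet), md e
      ≤ 2 * E.card := by
    intro i
    obtain ⟨c, hcmem, hcinj⟩ := forest_inj (hforest i)
    set S := E.filter (fun e => e ∈ (F i).edgeSet) with hS
    have hSsub : ∀ e ∈ S, e ∈ (F i).edgeSet := fun e he => (Finset.mem_filter.mp he).2
    have hmdle : ∀ e ∈ S, md e ≤ G.degree (c e) := by
      intro e he
      have hce : c e ∈ s(e.out.1, e.out.2) := by
        rw [sym2_out_eq]; exact hcmem e (hSsub e he)
      rw [Sym2.mem_iff] at hce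
      have hshow : md e = min (G.degree e.out.1) (G.degree e.out.2) := rfl
      rcases hce with h | h
      · rw [hshow, h]; exact min_le_left _ _
      · rw [hshow, h]; exact min_le_right _ _
    calc ∑ e ∈ S, md e ≤ ∑ e ∈ S, G.degree (c e) := Finset.sum_le_sum hmdle
      _ = ∑ w ∈ S.image c, G.degree w := by
          rw [eq_comm]
          exact Finset.sum_image fun x hx y hy h => hcinj (hSsub x hx) (hSsub y hy) h
      _ ≤ ∑ w : V, G.degree w := Finset.sum_le_sum_of_subset (Finset.subset_univ _)
      _ = 2 * E.card := G.sum_degrees_eq_twice_card_edges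
  -- Step 5: the forests partition the edges
  have step4 : ∑ e ∈ E, md e = ∑ i : Fin α, ∑ e ∈ E.filter (fun e => e ∈ (F i).edgeSet), md e := by
    have : ∀ e ∈ E, md e = ∑ i : Fin α, if e ∈ (F i).edgeSet then md e else 0 := by
      intro e he
      have heE : e ∈ G.edgeSet := by rwa [hE, mem_edgeFinset] at he
      obtain ⟨i0, hi0, huniq⟩ := hpart e heE
      rw [Finset.sum_eq_single i0]
      · rw [if_pos hi0]
      · intro j _ hj
        rw [if_neg fun hj' => hj (huniq j hj')]
      · intro h
        exact absurd (Finset.mem_univ i0) h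
    rw [Finset.sum_congr rfl this, Finset.sum_comm]
    exact Finset.sum_congr rfl fun i _ => (Finset.sum_filter _ _).symm
  calc 3 * T.card = ∑ e ∈ E, (T.filter (fun t => ∀ a ∈ e, a ∈ t)).card := step1
    _ ≤ ∑ e ∈ E, md e := Finset.sum_le_sum step2
    _ = ∑ i : Fin α, ∑ e ∈ E.filter (fun e => e ∈ (F i).edgeSet), md e := step4
    _ ≤ ∑ _i : Fin α, 2 * E.card := Finset.sum_le_sum fun i _ => step3 i
    _ = 2 * E.card * α := by
        rw [Finset.sum_const, Finset.card_univ, Fintype.card_fin, smul_eq_mul, mul_comm]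
end

section
/- For each edge {u,v} of a finite simple graph, the number of wedges (paths of length 2) whose middle vertex is an endpoint of minimal degree among {u,v} and which use the edge {u,v} is at most min(deg(u), deg(v)) − 1; summing over all edges, the total count of such wedges is at most 2·m·α when the graph has arboricity α. -/
open Finset SimpleGraph

section Aux

variable {V : Type*} [Fintype V] [DecidableEq V]

/-- In a path starting at `a`, at most one edge of the form `s(a, x)` occurs. -/
private lemma start_edge_unique {F : SimpleGraph V} {a b x y : V} (p : F.Walk a b)
    (hp : p.IsPath) (hx : s(a, x) ∈ p.edges) (hy : s(a, y) ∈ p.edges) : x = y := by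
  cases p with
  | nil => simp at hx
  | @cons _ c _ h q =>
    rw [SimpleGraph.Walk.cons_isPath_iff] at hp
    simp only [SimpleGraph.Walk.edges_cons, List.mem_cons] at hx hy
    have hxc : x = c := by
      rcases hx with hx | hx
      · exact Sym2.congr_right.mp hx
      · exact absurd (SimpleGraph.Walk.fst_mem_support_of_mem_edges q hx) hp.2
    have hyc : y = c := by
      rcases hy with hy | hy
      · exact Sym2.congr_right.mp hy
      · exact absurd (SimpleGraph.Walk.fst_mem_support_of_mem_edges q hy) hp.2
    rw [hxc, hyc]

/-- A finite acyclic graph with an edge has a vertex of degree one. -/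
private lemma exists_degree_one {F : SimpleGraph V} [DecidableRel F.Adj] (hF : F.IsAcyclic)
    {u₀ v₀ : V} (h₀ : F.Adj u₀ v₀) : ∃ z, F.degree z = 1 := by
  classical
  set P : ℕ → Prop := fun n => ∃ (a b : V) (p : F.Walk a b), p.IsPath ∧ p.length = n with hP
  have h1 : P 1 := ⟨u₀, v₀, Walk.cons h₀ Walk.nil, by simp [h₀.ne], by simp⟩
  have hcard : 1 ≤ Fintype.card V := by
    have : Nonempty V := ⟨u₀⟩
    exact Fintype.card_pos
  obtain ⟨a, b, p, hp, hlen⟩ := Nat.findGreatest_spec hcard h1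
  set n := Nat.findGreatest P (Fintype.card V) with hn
  -- every neighbor x of a contributes an edge s(a,x) of p
  have hmem : ∀ x, F.Adj a x → s(a, x) ∈ p.edges := by
    intro x hax
    by_cases hxs : x ∈ p.support
    · -- otherwise we find a cycle
      have hq := hp.takeUntil hxs
      have hcyc := hF (Walk.cons hax.symm (p.takeUntil x hxs))
      rw [SimpleGraph.Walk.cons_isCycle_iff] at hcyc
      push_neg at hcyc
      have hmemq : s(x, a) ∈ (p.takeUntil x hxs).edges := hcyc hq
      have : s(a, x) ∈ (p.takeUntil x hxs).edges := by rwa [Sym2.eq_swap]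
      exact SimpleGraph.Walk.edges_takeUntil_subset p hxs this
    · -- otherwise we could extend the maximal path
      exfalso
      have hpath : (Walk.cons hax.symm p).IsPath := by
        rw [SimpleGraph.Walk.cons_isPath_iff]
        exact ⟨hp, hxs⟩
      have hlt : (Walk.cons hax.symm p).length < Fintype.card V := hpath.length_lt
      have hle' : n + 1 ≤ n := by
        have : P (n + 1) := ⟨x, b, Walk.cons hax.symm p, hpath, by simp [hlen]⟩
        refine Nat.le_findGreatest ?_ this
        exact le_of_lt (by simpa [hlen] using hlt)
      omega
  have hn1 : 1 ≤ n := Nat.le_findGreatest hcard h1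
  refine ⟨a, ?_⟩
  cases p with
  | nil => simp at hlen; omega
  | @cons _ c _ h q =>
    have hset : F.neighborFinset a = {c} := by
      ext z
      simp only [mem_neighborFinset, Finset.mem_singleton]
      constructor
      · intro hz
        have h1 : s(a, z) ∈ (Walk.cons h q).edges := hmem z hz
        have h2 : s(a, c) ∈ (Walk.cons h q).edges := by
          simp [SimpleGraph.Walk.edges_cons]
        exact start_edge_unique _ hp h1 h2
      · rintro rfl; exact h
    rw [← card_neighborFinset_eq_degree, hset, Finset.card_singleton]

/-- Edges of a finite acyclic graph can be injectively assigned to their endpoints. -/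
private lemma exists_injection : ∀ (n : ℕ) (F : SimpleGraph V) [DecidableRel F.Adj],
    F.edgeFinset.card ≤ n → F.IsAcyclic →
    ∃ f : Sym2 V → V, (∀ e ∈ F.edgeSet, f e ∈ e) ∧ Set.InjOn f F.edgeSet := by
  intro n
  induction n with
  | zero =>
    intro F _ hcard hF
    have hbot : F = ⊥ := by
      have h0 : F.edgeFinset = ∅ := Finset.card_eq_zero.mp (Nat.le_zero.mp hcard)
      exact SimpleGraph.edgeFinset_eq_empty.mp h0
    refine ⟨fun e => e.out.1, ?_, ?_⟩
    · intro e he; exfalso; rw [hbot] at he; simpa using he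
    · intro e he; exfalso; rw [hbot] at he; simpa using he
  | succ n ih =>
    intro F _ hcard hF
    classical
    by_cases hne : F.edgeFinset.Nonempty
    · obtain ⟨e₀, he₀⟩ := hne
      rw [mem_edgeFinset] at he₀
      induction e₀ using Sym2.ind with
      | _ u₀ v₀ =>
      rw [mem_edgeSet] at he₀
      obtain ⟨z, hz1⟩ := exists_degree_one hF he₀
      rw [← card_neighborFinset_eq_degree] at hz1
      obtain ⟨x, hx⟩ := Finset.card_eq_one.mp hz1
      have hadj : F.Adj z x := by
        rw [← mem_neighborFinset, hx]; exact Finset.mem_singleton_self x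
      set F' : SimpleGraph V := F.deleteEdges {s(z, x)} with hF'
      have hF'le : F' ≤ F := SimpleGraph.deleteEdges_le _
      have hF'acyc : F'.IsAcyclic := by
        intro v c hc
        exact hF (c.mapLe hF'le) ((SimpleGraph.Walk.mapLe_isCycle hF'le).mpr hc)
      have hF'edge : F'.edgeSet = F.edgeSet \ {s(z, x)} :=
        SimpleGraph.edgeSet_deleteEdges _
      have hsub : F'.edgeFinset ⊆ F.edgeFinset.erase s(z, x) := by
        intro e he
        rw [mem_edgeFinset, hF'edge] at he
        rw [Finset.mem_erase, mem_edgeFinset]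
        exact ⟨he.2, he.1⟩
      have hcard' : F'.edgeFinset.card ≤ n := by
        have h1 : (F.edgeFinset.erase s(z, x)).card = F.edgeFinset.card - 1 :=
          Finset.card_erase_of_mem (by rwa [mem_edgeFinset, mem_edgeSet])
        have h2 := Finset.card_le_card hsub
        omega
      obtain ⟨f', hf'mem, hf'inj⟩ := ih F' hcard' hF'acyc
      -- a key fact: `z` is in no edge of `F'`
      have hzno : ∀ e ∈ F'.edgeSet, z ∉ e := by
        intro e he hze
        set y := Sym2.Mem.other hze with hy
        have hspec : s(z, y) = e := Sym2.other_spec hze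
        have : F'.Adj z y := by rw [← SimpleGraph.mem_edgeSet, hspec]; exact he
        rw [hF', SimpleGraph.deleteEdges_adj] at this
        have hyx : y = x := by
          have : y ∈ F.neighborFinset z := by rw [mem_neighborFinset]; exact this.1
          rw [hx] at this; exact Finset.mem_singleton.mp this
        exact this.2 (by rw [hyx]; rfl)
      refine ⟨fun e => if e = s(z, x) then z else f' e, ?_, ?_⟩
      · intro e he
        by_cases h : e = s(z, x)
        · subst h; simp
        · have he' : e ∈ F'.edgeSet := by
            rw [hF'edge]; exact ⟨he, h⟩
          simp only [h, if_false]
          exact hf'mem e he'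
      · intro e₁ h₁ e₂ h₂ heq
        by_cases k₁ : e₁ = s(z, x) <;> by_cases k₂ : e₂ = s(z, x)
        · rw [k₁, k₂]
        · exfalso
          have he₂' : e₂ ∈ F'.edgeSet := by rw [hF'edge]; exact ⟨h₂, k₂⟩
          simp only [k₁, k₂, if_true, if_false] at heq
          exact hzno e₂ he₂' (heq ▸ hf'mem e₂ he₂')
        · exfalso
          have he₁' : e₁ ∈ F'.edgeSet := by rw [hF'edge]; exact ⟨h₁, k₁⟩
          simp only [k₁, k₂, if_true, if_false] at heq
          exact hzno e₁ he₁' (heq ▸ hf'mem e₁ he₁')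
        · simp only [k₁, k₂, if_false] at heq
          exact hf'inj (by rw [hF'edge]; exact ⟨h₁, k₁⟩)
            (by rw [hF'edge]; exact ⟨h₂, k₂⟩) heq
    · rw [Finset.not_nonempty_iff_eq_empty, SimpleGraph.edgeFinset_eq_empty] at hne
      refine ⟨fun e => e.out.1, ?_, ?_⟩
      · intro e he; exfalso; rw [hne] at he; simpa using he
      · intro e he; exfalso; rw [hne] at he; simpa using he

end Aux

/-- For each edge `e` of `G`, the number of wedges using `e` whose middle vertex is a
minimum-degree endpoint `w e` of `e` is at most `min(deg u, deg v) - 1`; summing over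
all edges, if the edges of `G` decompose into `α` forests then the total count of such
wedges is at most `2 * m * α`. -/
theorem wedge_count_per_edge_and_total
    {V : Type*} [Fintype V] [DecidableEq V] (G : SimpleGraph V) [DecidableRel G.Adj]
    (α : ℕ) (F : Fin α → SimpleGraph V)
    (hle : ∀ i, F i ≤ G)
    (hforest : ∀ i, (F i).IsAcyclic)
    (hpart : ∀ e ∈ G.edgeSet, ∃! i, e ∈ (F i).edgeSet)
    (w : Sym2 V → V)
    (hw : ∀ e ∈ G.edgeFinset, w e ∈ e)
    (hwmin : ∀ e ∈ G.edgeFinset, G.degree (w e) = minDeg G e) :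
    (∀ e ∈ G.edgeFinset,
        ((G.neighborFinset (w e)).filter (fun c => s(w e, c) ≠ e)).card ≤ minDeg G e - 1) ∧
      ∑ e ∈ G.edgeFinset,
          ((G.neighborFinset (w e)).filter (fun c => s(w e, c) ≠ e)).card ≤
        2 * G.edgeFinset.card * α := by
  classical
  -- Part 1: per-edge bound
  have part1 : ∀ e ∈ G.edgeFinset,
      ((G.neighborFinset (w e)).filter (fun c => s(w e, c) ≠ e)).card ≤ minDeg G e - 1 := by
    intro e he
    have hwe : w e ∈ e := hw e he
    have hspec : s(w e, Sym2.Mem.other hwe) = e := Sym2.other_spec hwe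
    have hadj : G.Adj (w e) (Sym2.Mem.other hwe) := by
      rw [← SimpleGraph.mem_edgeSet, hspec]
      exact mem_edgeFinset.mp he
    have hsub : (G.neighborFinset (w e)).filter (fun c => s(w e, c) ≠ e) ⊆
        (G.neighborFinset (w e)).erase (Sym2.Mem.other hwe) := by
      intro c hc
      rw [Finset.mem_filter] at hc
      rw [Finset.mem_erase]
      refine ⟨?_, hc.1⟩
      intro hcy
      exact hc.2 (by rw [hcy]; exact hspec)
    calc ((G.neighborFinset (w e)).filter (fun c => s(w e, c) ≠ e)).card
        ≤ ((G.neighborFinset (w e)).erase (Sym2.Mem.other hwe)).card :=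
          Finset.card_le_card hsub
      _ = (G.neighborFinset (w e)).card - 1 :=
          Finset.card_erase_of_mem (by rwa [mem_neighborFinset])
      _ = minDeg G e - 1 := by
          rw [card_neighborFinset_eq_degree, hwmin e he]
  refine ⟨part1, ?_⟩
  -- the minimal degree of an edge is at most the degree of either endpoint
  have hminle : ∀ (e : Sym2 V) (x : V), x ∈ e → minDeg G e ≤ G.degree x := by
    intro e
    induction e using Sym2.ind with
    | _ a b =>
      intro x hx
      rw [Sym2.mem_iff] at hx
      rcases hx with rfl | rfl
      · exact min_le_left _ _
      · exact min_le_right _ _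
  -- partition the edges according to the forests
  set s : Fin α → Finset (Sym2 V) :=
    fun i => G.edgeFinset.filter (fun e => e ∈ (F i).edgeSet) with hs
  have hcover : Finset.univ.biUnion s = G.edgeFinset := by
    apply Finset.Subset.antisymm
    · intro e he
      rw [Finset.mem_biUnion] at he
      obtain ⟨i, _, hei⟩ := he
      exact Finset.mem_of_mem_filter e hei
    · intro e he
      obtain ⟨i, hi, _⟩ := hpart e (mem_edgeFinset.mp he)
      rw [Finset.mem_biUnion]
      exact ⟨i, Finset.mem_univ i, Finset.mem_filter.mpr ⟨he, hi⟩⟩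
  have hdisj : ((Finset.univ : Finset (Fin α)) : Set (Fin α)).PairwiseDisjoint s := by
    intro i _ j _ hij
    simp only [Function.onFun]
    rw [Finset.disjoint_left]
    intro e hei hej
    rw [hs, Finset.mem_filter] at hei hej
    obtain ⟨k, _, hk⟩ := hpart e (mem_edgeFinset.mp hei.1)
    exact hij ((hk i hei.2).trans (hk j hej.2).symm)
  -- per-forest bound via the injection
  have key : ∀ i, ∑ e ∈ s i, minDeg G e ≤ 2 * G.edgeFinset.card := by
    intro i
    obtain ⟨f, hfmem, hfinj⟩ :=
      exists_injection ((F i).edgeFinset.card) (F i) le_rfl (hforest i)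
    have hsi_sub : ∀ e ∈ s i, e ∈ (F i).edgeSet := by
      intro e he
      exact (Finset.mem_filter.mp he).2
    calc ∑ e ∈ s i, minDeg G e
        ≤ ∑ e ∈ s i, G.degree (f e) := by
          refine Finset.sum_le_sum fun e he => ?_
          exact hminle e (f e) (hfmem e (hsi_sub e he))
      _ = ∑ v ∈ (s i).image f, G.degree v := by
          rw [Finset.sum_image]
          intro a ha b hb hab
          exact hfinj (hsi_sub a ha) (hsi_sub b hb) hab
      _ ≤ ∑ v ∈ Finset.univ, G.degree v :=
          Finset.sum_le_sum_of_subset (Finset.subset_univ _)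
      _ = 2 * G.edgeFinset.card := G.sum_degrees_eq_twice_card_edges
  -- total bound
  have total : ∑ e ∈ G.edgeFinset, minDeg G e ≤ 2 * G.edgeFinset.card * α := by
    have hsum : ∑ e ∈ G.edgeFinset, minDeg G e = ∑ i, ∑ e ∈ s i, minDeg G e := by
      rw [← hcover, Finset.sum_biUnion hdisj]
    rw [hsum]
    calc ∑ i, ∑ e ∈ s i, minDeg G e
        ≤ ∑ _i : Fin α, 2 * G.edgeFinset.card := Finset.sum_le_sum fun i _ => key i
      _ = α * (2 * G.edgeFinset.card) := by
          rw [Finset.sum_const, Finset.card_univ, Fintype.card_fin, smul_eq_mul]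
      _ = 2 * G.edgeFinset.card * α := by ring
  calc ∑ e ∈ G.edgeFinset,
        ((G.neighborFinset (w e)).filter (fun c => s(w e, c) ≠ e)).card
      ≤ ∑ e ∈ G.edgeFinset, (minDeg G e - 1) :=
        Finset.sum_le_sum part1
    _ ≤ ∑ e ∈ G.edgeFinset, minDeg G e :=
        Finset.sum_le_sum fun e _ => Nat.sub_le _ _
    _ ≤ 2 * G.edgeFinset.card * α := total
end
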